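/- Let G be a connected planar embedded multigraph with no self-loops in G or its dual G*, and suppose there is a face f₀ such that every other face has degree at most k₂. Then every edge of G is incident to at least one face of degree at most k₂, and hence (by the cycle bound on effective resistance) has effective resistance at most 1 − 1/k₂. -/

import Mathlib

/-- Net current out of vertex `c` for a current assignment `i` on oriented edges. -/
def netFlow {V E : Type} [Fintype E] [DecidableEq V] (s t : E → V) (i : E → ℝ) (c : V) : ℝ :=
  (∑ e : E, if s e = c then i e else 0) - (∑ e : E, if t e = c then i e else 0)

/-- `(v, i)` is the electrical flow of one unit of current from `a` to `b` in the
multigraph `(s, t)` with unit resistance on every edge; the effective resistance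
`R_{ab}` is then `v a − v b`. -/
def IsUnitFlow {V E : Type} [Fintype E] [DecidableEq V] (s t : E → V) (a b : V)
    (v : V → ℝ) (i : E → ℝ) : Prop :=
  (∀ c : V, netFlow s t i c = (if c = a then 1 else 0) - (if c = b then 1 else 0)) ∧
  (∀ e : E, v (s e) - v (t e) = i e)

/-- Adjacency in a multigraph. -/
def MAdj {V E : Type} (s t : E → V) (x y : V) : Prop :=
  ∃ e : E, (s e = x ∧ t e = y) ∨ (s e = y ∧ t e = x)

/-- Connectivity of a multigraph. -/
def MConnected {V E : Type} (s t : E → V) : Prop :=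
  Nonempty V ∧ ∀ x y : V, Relation.ReflTransGen (MAdj s t) x y

/-- The degree of a face `f`: the number of edges on its boundary.  Here a planar
embedding of the multigraph `(s, t)` is recorded combinatorially by a face type `F` and
maps `fl fr : E → F` giving the two faces bounded by each edge. -/
noncomputable def faceDeg {E F : Type} [Fintype E] (fl fr : E → F) (f : F) : ℕ :=
  Nat.card {e : E // fl e = f ∨ fr e = f}

/-- The boundary of the face `f` is a simple cycle: there are `faceDeg fl fr f` distinct
vertices and distinct edges, the edges being exactly those bounding `f`, joining
consecutive vertices around the cycle. -/
def FaceBoundaryIsCycle {V E F : Type} [Fintype E] (s t : E → V) (fl fr : E → F)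
    (f : F) : Prop :=
  ∃ (k : ℕ) (hk : 2 ≤ k) (x : Fin k → V) (e' : Fin k → E),
    k = faceDeg fl fr f ∧ Function.Injective x ∧ Function.Injective e' ∧
    (∀ j : Fin k, fl (e' j) = f ∨ fr (e' j) = f) ∧
    (∀ e : E, (fl e = f ∨ fr e = f) → ∃ j : Fin k, e' j = e) ∧
    (∀ j : Fin k, (s (e' j) = x j ∧ t (e' j) = x (j + ⟨1, by omega⟩)) ∨
      (s (e' j) = x (j + ⟨1, by omega⟩) ∧ t (e' j) = x j))

/-- let `(s, t)` be a connected planar embedded multigraph (faces `F`, each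
edge `e` bounding the two faces `fl e`, `fr e`) with no self-loops in the graph
(`s e ≠ t e`) or its dual (`fl e ≠ fr e`), and suppose there is a face `f₀` such that
every other face has degree at most `k₂`. Then every edge is incident to at least one
face of degree at most `k₂`, and hence has effective resistance at most `1 − 1/k₂`. -/
lemma sum_by_parts {V E : Type} [Fintype V] [Fintype E] [DecidableEq V]
    (s t : E → V) (w : E → ℝ) (v : V → ℝ) :
    ∑ c : V, netFlow s t w c * v c = ∑ e : E, w e * (v (s e) - v (t e)) := by
  unfold netFlow
  simp only [sub_mul, Finset.sum_mul, Finset.sum_sub_distrib, ite_mul, zero_mul]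
  rw [Finset.sum_comm, Finset.sum_comm (f := fun c e => if t e = c then w e * v c else 0)]
  simp [Finset.sum_ite_eq, mul_sub, Finset.sum_sub_distrib]

lemma res_le_energy {V E : Type} [Fintype V] [Fintype E] [DecidableEq V]
    (s t : E → V) (a b : V) (v : V → ℝ) (i j : E → ℝ)
    (hi : IsUnitFlow s t a b v i)
    (hj : ∀ c, netFlow s t j c = (if c = a then 1 else 0) - (if c = b then 1 else 0)) :
    v a - v b ≤ ∑ d : E, (j d)^2 := by
  obtain ⟨hi1, hi2⟩ := hi
  have key : ∀ w : E → ℝ,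
      (∀ c, netFlow s t w c = (if c = a then 1 else 0) - (if c = b then 1 else 0)) →
      ∑ d : E, w d * i d = v a - v b := by
    intro w hw
    have h1 : ∑ d : E, w d * i d = ∑ c : V, netFlow s t w c * v c := by
      rw [sum_by_parts]
      exact Finset.sum_congr rfl fun d _ => by rw [hi2 d]
    rw [h1]
    simp only [hw, sub_mul, ite_mul, one_mul, zero_mul, Finset.sum_sub_distrib,
      Finset.sum_ite_eq', Finset.mem_univ, if_true]
  have hii := key i hi1
  have hji := key j hj
  have h0 : (0:ℝ) ≤ ∑ d : E, (j d - i d)^2 := Finset.sum_nonneg fun d _ => sq_nonneg _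
  have hexp : ∑ d : E, (j d - i d)^2
      = ∑ d : E, (j d)^2 - 2 * ∑ d : E, j d * i d + ∑ d : E, i d * i d := by
    rw [Finset.mul_sum, ← Finset.sum_sub_distrib, ← Finset.sum_add_distrib]
    exact Finset.sum_congr rfl fun d _ => by ring
  rw [hexp, hji, hii] at h0
  linarith

lemma flow_exists {V E : Type} [Fintype E] [DecidableEq V] [DecidableEq E]
    {k : ℕ} (hk : 2 ≤ k) (s t : E → V)
    (x : Fin k → V) (e' : Fin k → E) (hxinj : Function.Injective x)
    (heinj : Function.Injective e')
    (hor : ∀ m : Fin k, (s (e' m) = x m ∧ t (e' m) = x (m + ⟨1, by omega⟩)) ∨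
      (s (e' m) = x (m + ⟨1, by omega⟩) ∧ t (e' m) = x m))
    (j0 : Fin k) :
    ∃ j : E → ℝ,
      (∀ c : V, netFlow s t j c =
        (if c = s (e' j0) then 1 else 0) - (if c = t (e' j0) then 1 else 0)) ∧
      ∑ d : E, (j d)^2 = ((k:ℝ) - 1) / k := by
  haveI : NeZero k := ⟨by omega⟩
  set one : Fin k := ⟨1, by omega⟩ with hone_def
  have hone0 : one ≠ 0 := by
    simp [hone_def, Fin.ext_iff]
  have hadd_ne : ∀ m : Fin k, m + one ≠ m := by
    intro m h
    exact hone0 (by rwa [add_eq_left] at h)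
  have hx_ne : ∀ m : Fin k, x (m + one) ≠ x m := fun m h => hadd_ne m (hxinj h)
  set σ : Fin k → ℝ := fun m => if s (e' m) = x m then 1 else -1 with hσ
  set ε : ℝ := σ j0 with hε
  set f : Fin k → ℝ := fun m => ε * (if m = j0 then ((k:ℝ) - 1) / k else -(1 / k)) with hf
  set j : E → ℝ := fun d => ∑ m : Fin k, if e' m = d then σ m * f m else 0 with hj
  have hjval : ∀ m : Fin k, j (e' m) = σ m * f m := by
    intro m
    rw [hj]
    simp [heinj.eq_iff, Finset.sum_ite_eq' Finset.univ m]
  have hjzero : ∀ d : E, (∀ m : Fin k, e' m ≠ d) → j d = 0 := by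
    intro d hd
    rw [hj]
    exact Finset.sum_eq_zero fun m _ => by simp [hd m]
  -- sums over E of functions supported on the range of e'
  have hsum : ∀ G : E → ℝ, (∀ d : E, (∀ m : Fin k, e' m ≠ d) → G d = 0) →
      ∑ d : E, G d = ∑ m : Fin k, G (e' m) := by
    intro G hG
    have himg : ∑ m : Fin k, G (e' m) = ∑ d ∈ Finset.univ.image e', G d :=
      (Finset.sum_image (fun a _ b _ h => heinj h)).symm
    rw [himg]
    exact (Finset.sum_subset (Finset.subset_univ _)
      (fun d _ hd => hG d (fun m hm => hd (by simp [← hm])))).symm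
  have hσsq : ∀ m : Fin k, σ m * σ m = 1 := by
    intro m
    rw [hσ]; dsimp only; split <;> norm_num
  constructor
  constructor
  · -- netFlow condition
    intro c
    unfold netFlow
    rw [hsum (fun d => if s d = c then j d else 0) (fun d hd => by simp [hjzero d hd]),
        hsum (fun d => if t d = c then j d else 0) (fun d hd => by simp [hjzero d hd])]
    simp only [hjval]
    rw [← Finset.sum_sub_distrib]
    have step1 : ∀ m : Fin k,
        ((if s (e' m) = c then σ m * f m else 0) - (if t (e' m) = c then σ m * f m else 0))
        = (if x m = c then f m else 0) - (if x (m + one) = c then f m else 0) := by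
      intro m
      rcases hor m with ⟨h1, h2⟩ | ⟨h1, h2⟩
      · have : σ m = 1 := by rw [hσ]; simp [h1]
        rw [h1, h2, this, one_mul]
      · have : σ m = -1 := by
          rw [hσ]; dsimp only; rw [h1, if_neg (hx_ne m)]
        rw [h1, h2, this]
        by_cases hc1 : x m = c <;> by_cases hc2 : x (m + one) = c <;>
          simp [hc1, hc2] <;> ring
    rw [Finset.sum_congr rfl (fun m _ => step1 m), Finset.sum_sub_distrib]
    have step2 : ∑ m : Fin k, (if x (m + one) = c then f m else 0)
        = ∑ m : Fin k, (if x m = c then f (m - one) else 0) := by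
      apply Fintype.sum_equiv (Equiv.addRight one)
      intro m
      simp [add_sub_cancel_right]
    rw [step2, ← Finset.sum_sub_distrib]
    have hdiff : ∀ m : Fin k,
        ((if x m = c then f m else 0) - (if x m = c then f (m - one) else 0))
        = (if m = j0 then (if x m = c then ε else 0) else 0)
          - (if m = j0 + one then (if x m = c then ε else 0) else 0) := by
      intro m
      have hkR : (k:ℝ) ≠ 0 := by positivity
      have hsub : m - one = j0 ↔ m = j0 + one := by
        constructor
        · intro h; rw [← h]; abel
        · intro h; rw [h]; abel
      by_cases h1 : m = j0
      · have h2 : m ≠ j0 + one := by rw [h1]; exact fun h => hadd_ne j0 h.symm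
        have h3 : m - one ≠ j0 := fun h => h2 (hsub.mp h)
        rw [hf]
        simp only [h1, h3, if_true, if_neg h2, if_neg (show j0 ≠ j0 + one from
          fun h => hadd_ne j0 h.symm)]
        by_cases hc : x j0 = c <;> simp [hc, hone0] <;> field_simp <;> ring
      · by_cases h2 : m = j0 + one
        · subst h2
          have h3 : j0 + one - one = j0 := by abel
          rw [hf]
          by_cases hc : x (j0 + one) = c <;>
            simp [h1, h3, hc, hone0] <;> field_simp <;> ring
        · have h3 : m - one ≠ j0 := fun h => h2 (hsub.mp h)
          simp [hf, h1, h2, h3]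
    rw [Finset.sum_congr rfl (fun m _ => hdiff m), Finset.sum_sub_distrib,
      Finset.sum_ite_eq' Finset.univ j0, Finset.sum_ite_eq' Finset.univ (j0 + one)]
    simp only [Finset.mem_univ, if_true]
    rcases hor j0 with ⟨h1, h2⟩ | ⟨h1, h2⟩
    · have hε1 : ε = 1 := by rw [hε, hσ]; simp [h1]
      rw [h1, h2, hε1]
      simp [eq_comm]
    · have hε1 : ε = -1 := by
        rw [hε, hσ]; dsimp only; rw [h1, if_neg (hx_ne j0)]
      rw [h1, h2, hε1]
      by_cases hc1 : x j0 = c <;> by_cases hc2 : x (j0 + one) = c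
      · exact absurd (hc2.trans hc1.symm) (hx_ne j0)
      · rw [if_pos hc1, if_neg hc2, if_neg (fun h => hc2 (h.symm : x (j0+one) = c)),
          if_pos hc1.symm]; norm_num
      · rw [if_neg hc1, if_pos hc2, if_pos hc2.symm,
          if_neg (fun h => hc1 (h.symm : x j0 = c))]; norm_num
      · rw [if_neg hc1, if_neg hc2, if_neg (fun h => hc2 (h.symm : x (j0+one) = c)),
          if_neg (fun h => hc1 (h.symm : x j0 = c))]
  · -- energy
    rw [hsum (fun d => (j d)^2) (fun d hd => by simp [hjzero d hd])]
    simp only [hjval]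
    have hkR : (k:ℝ) ≠ 0 := by positivity
    have hεsq : ε * ε = 1 := hσsq j0
    have : ∀ m : Fin k, (σ m * f m)^2
        = (if m = j0 then (((k:ℝ)-1)/k)^2 - (1/k)^2 else 0) + (1/k)^2 := by
      intro m
      have : (σ m * f m)^2 = f m ^ 2 := by
        rw [mul_pow, sq, hσsq m, one_mul]
      rw [this, hf]
      by_cases h : m = j0 <;> simp [h, mul_pow, sq, hεsq] <;> ring_nf <;>
        rw [show ε^2 = 1 by rw [sq]; exact hεsq] <;> ring
    rw [Finset.sum_congr rfl (fun m _ => this m), Finset.sum_add_distrib,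
      Finset.sum_ite_eq' Finset.univ j0, Finset.sum_const, Finset.card_univ,
      Fintype.card_fin]
    simp only [Finset.mem_univ, if_true, nsmul_eq_mul]
    field_simp
    ring


theorem stmt8 {V E F : Type} [Fintype V] [Fintype E] [Fintype F] [DecidableEq V]
    (s t : E → V) (hconn : MConnected s t) (hloop : ∀ e : E, s e ≠ t e)
    (fl fr : E → F) (hdual : ∀ e : E, fl e ≠ fr e)
    (hfaces : ∀ f : F, FaceBoundaryIsCycle s t fl fr f)
    (f₀ : F) (k₂ : ℕ) (hk₂ : ∀ f : F, f ≠ f₀ → faceDeg fl fr f ≤ k₂) :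
    ∀ e : E, (∃ f : F, (fl e = f ∨ fr e = f) ∧ faceDeg fl fr f ≤ k₂) ∧
      ∀ (v : V → ℝ) (i : E → ℝ), IsUnitFlow s t (s e) (t e) v i →
        v (s e) - v (t e) ≤ 1 - 1 / (k₂ : ℝ) := by
  classical
  intro e
  have hface : ∃ f : F, (fl e = f ∨ fr e = f) ∧ faceDeg fl fr f ≤ k₂ := by
    by_cases h : fl e = f₀
    · exact ⟨fr e, Or.inr rfl, hk₂ _ (fun hf => hdual e (h.trans hf.symm))⟩
    · exact ⟨fl e, Or.inl rfl, hk₂ _ h⟩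
  refine ⟨hface, ?_⟩
  intro v i hvi
  obtain ⟨f, hef, hfk⟩ := hface
  obtain ⟨k, hk, x, e', hkdeg, hxinj, heinj, hbd, hcov, hor⟩ := hfaces f
  obtain ⟨j0, hj0⟩ := hcov e hef
  obtain ⟨j, hjnet, hjen⟩ := flow_exists hk s t x e' hxinj heinj hor j0
  rw [hj0] at hjnet
  have hres := res_le_energy s t (s e) (t e) v i j hvi hjnet
  rw [hjen] at hres
  have hkk2 : k ≤ k₂ := hkdeg ▸ hfk
  have hkpos : (0:ℝ) < k := by
    have : 0 < k := by omega
    exact_mod_cast this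
  have h1 : ((k:ℝ) - 1) / k = 1 - 1 / (k:ℝ) := by field_simp
  have h2 : 1 / (k₂:ℝ) ≤ 1 / (k:ℝ) :=
    one_div_le_one_div_of_le hkpos (by exact_mod_cast hkk2)
  linarith
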